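/- Let (u,v) be a mutually abelian-bordered pair of binary words with |u| = |v| = n ≥ 2, and set i = lsb(u,v) and j = lsb(v,u). Then i + j ≤ n if and only if there exist nonempty binary words α, β, β', α' and (possibly empty) binary words x, x' such that u = αxβ, v = β'x'α', β ~ β', α ~ α', |α| = j, |β| = i, and both (β, β') and (α, α') are mutually abelian-unbordered pairs. -/
import Mathlib


/-- Abelian equivalence of binary words; the alphabet `{a, b}` is encoded by
`Bool` with `a = true` and `b = false`. -/
def AbEq (x y : List Bool) : Prop :=
  x.count true = y.count true ∧ x.count false = y.count false

/-- `(x, y)` is an internal abelian-border of `(u, v)`: `x` is a nonempty proper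
suffix of `u`, `y` is a proper prefix of `v`, and `x ~ y`. -/
def IsIntBorder (u v x y : List Bool) : Prop :=
  x ≠ [] ∧ x ≠ u ∧ x <:+ u ∧ y <+: v ∧ y ≠ v ∧ AbEq x y

/-- `(x, y)` is an external abelian-border of `(u, v)`: `x` is a nonempty proper
prefix of `u`, `y` is a proper suffix of `v`, and `x ~ y`. -/
def IsExtBorder (u v x y : List Bool) : Prop :=
  x ≠ [] ∧ x ≠ u ∧ x <+: u ∧ y <:+ v ∧ y ≠ v ∧ AbEq x y

/-- `(u, v)` has an internal abelian-border. -/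
def HasIntB (u v : List Bool) : Prop := ∃ x y, IsIntBorder u v x y

/-- `(u, v)` has an external abelian-border. -/
def HasExtB (u v : List Bool) : Prop := ∃ x y, IsExtBorder u v x y

/-- `(u, v)` is mutually abelian-bordered. -/
def MAB (u v : List Bool) : Prop := HasIntB u v ∧ HasExtB u v

/-- `(u, v)` is mutually abelian-unbordered. -/
def MAU (u v : List Bool) : Prop := ¬ HasIntB u v ∧ ¬ HasExtB u v

/-- `lsb u v` is the length of the shortest internal abelian-border of `(u, v)`:
the least `t` with `1 ≤ t ≤ |u| - 1` such that the suffix of `u` of length `t`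
is abelian equivalent to the prefix of `v` of length `t`. -/
noncomputable def lsb (u v : List Bool) : ℕ :=
  sInf {t | 1 ≤ t ∧ t ≤ u.length - 1 ∧ AbEq (u.drop (u.length - t)) (v.take t)}

lemma count_tf (l : List Bool) : l.count true + l.count false = l.length := by
  induction l with
  | nil => rfl
  | cons b l ih => cases b <;> simp [List.count_cons] <;> omega

lemma AbEq.len {x y : List Bool} (h : AbEq x y) : x.length = y.length := by
  have hx := count_tf x; have hy := count_tf y
  obtain ⟨h1, h2⟩ := h; omega

lemma AbEq.symm' {x y : List Bool} (h : AbEq x y) : AbEq y x :=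
  ⟨h.1.symm, h.2.symm⟩

lemma AbEq.cancel14 {a b c d : List Bool} (h : AbEq (a ++ b) (c ++ d))
    (h' : AbEq a d) : AbEq b c := by
  obtain ⟨h1, h2⟩ := h; obtain ⟨h3, h4⟩ := h'
  simp only [List.count_append] at h1 h2
  exact ⟨by omega, by omega⟩

lemma AbEq.cancel23 {a b c d : List Bool} (h : AbEq (a ++ b) (c ++ d))
    (h' : AbEq b c) : AbEq a d := by
  obtain ⟨h1, h2⟩ := h; obtain ⟨h3, h4⟩ := h'
  simp only [List.count_append] at h1 h2
  exact ⟨by omega, by omega⟩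

lemma extB_intB {u v : List Bool} (h : HasExtB u v) : HasIntB v u := by
  obtain ⟨x, y, hx0, hxu, hxp, hys, hyv, hxy⟩ := h
  refine ⟨y, x, ?_, hyv, hys, hxp, hxu, hxy.symm'⟩
  intro hy
  have := hxy.len
  rw [hy] at this
  simp at this
  exact hx0 this

lemma lsb_spec {u v : List Bool} (h : HasIntB u v) :
    1 ≤ lsb u v ∧ lsb u v ≤ u.length - 1 ∧
      AbEq (u.drop (u.length - lsb u v)) (v.take (lsb u v)) := by
  obtain ⟨x, y, hx0, hxu, hxs, hyp, hyv, hxy⟩ := h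
  have hne : ({t | 1 ≤ t ∧ t ≤ u.length - 1 ∧
      AbEq (u.drop (u.length - t)) (v.take t)} : Set ℕ).Nonempty := by
    refine ⟨x.length, ?_, ?_, ?_⟩
    · exact List.length_pos_iff.mpr hx0
    · have hle := hxs.length_le
      have : x.length ≠ u.length := fun he => hxu (hxs.eq_of_length he)
      omega
    · have hx_eq : x = u.drop (u.length - x.length) := List.suffix_iff_eq_drop.mp hxs
      have hy_eq : y = v.take y.length := List.prefix_iff_eq_take.mp hyp
      have hl : x.length = y.length := hxy.len
      rw [hx_eq, hy_eq, ← hl] at hxy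
      exact hxy
  exact Nat.sInf_mem hne

theorem stmt_1 (n : ℕ) (hn : 2 ≤ n) (u v : List Bool)
    (hu : u.length = n) (hv : v.length = n) (hmab : MAB u v)
    (i j : ℕ) (hi : i = lsb u v) (hj : j = lsb v u) :
    i + j ≤ n ↔
      ∃ α β β' α' x x' : List Bool,
        α ≠ [] ∧ β ≠ [] ∧ β' ≠ [] ∧ α' ≠ [] ∧
        u = α ++ x ++ β ∧ v = β' ++ x' ++ α' ∧
        AbEq β β' ∧ AbEq α α' ∧ α.length = j ∧ β.length = i ∧
        MAU β β' ∧ MAU α α' := by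
  obtain ⟨hint, hext⟩ := hmab
  have hint' : HasIntB v u := extB_intB hext
  have hiS := lsb_spec hint
  have hjS := lsb_spec hint'
  rw [hu, ← hi] at hiS
  rw [hv, ← hj] at hjS
  obtain ⟨hi1, hin, habi⟩ := hiS
  obtain ⟨hj1, hjn, habj⟩ := hjS
  constructor
  · -- forward direction
    intro hij
    have imin : ∀ t, 1 ≤ t → t < i → ¬ AbEq (u.drop (n - t)) (v.take t) := by
      intro t ht1 hti habs
      have hmem : t ∈ {t | 1 ≤ t ∧ t ≤ u.length - 1 ∧
          AbEq (u.drop (u.length - t)) (v.take t)} := by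
        refine ⟨ht1, by rw [hu]; omega, by rw [hu]; exact habs⟩
      have h2 : lsb u v ≤ t := by unfold lsb; exact Nat.sInf_le hmem
      omega
    have jmin : ∀ t, 1 ≤ t → t < j → ¬ AbEq (v.drop (n - t)) (u.take t) := by
      intro t ht1 htj habs
      have hmem : t ∈ {t | 1 ≤ t ∧ t ≤ v.length - 1 ∧
          AbEq (v.drop (v.length - t)) (u.take t)} := by
        refine ⟨ht1, by rw [hv]; omega, by rw [hv]; exact habs⟩
      have h2 : lsb v u ≤ t := by unfold lsb; exact Nat.sInf_le hmem
      omega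
    set α := u.take j with hα_def
    set β := u.drop (n - i) with hβ_def
    set β' := v.take i with hβ'_def
    set α' := v.drop (n - j) with hα'_def
    have lα : α.length = j := by rw [hα_def, List.length_take, hu]; omega
    have lβ : β.length = i := by rw [hβ_def, List.length_drop, hu]; omega
    have lβ' : β'.length = i := by rw [hβ'_def, List.length_take, hv]; omega
    have lα' : α'.length = j := by rw [hα'_def, List.length_drop, hv]; omega
    have hβsuf : β <:+ u := List.drop_suffix _ _
    have hβ'pre : β' <+: v := List.take_prefix _ _
    have hαpre : α <+: u := List.take_prefix _ _
    have hα'suf : α' <:+ v := List.drop_suffix _ _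
    -- MAU β β'
    have hnib : ¬ HasIntB β β' := by
      rintro ⟨x, y, hx0, hxβ, hxs, hyp, hyβ', hxy⟩
      have ht1 : 1 ≤ x.length := List.length_pos_iff.mpr hx0
      have hle : x.length ≤ i := lβ ▸ hxs.length_le
      have hti : x.length < i := by
        rcases lt_or_eq_of_le hle with h | h
        · exact h
        · exact absurd (hxs.eq_of_length (by rw [lβ, h])) hxβ
      have hxu : x <:+ u := hxs.trans hβsuf
      have hx_eq : x = u.drop (n - x.length) := by
        have := List.suffix_iff_eq_drop.mp hxu; rwa [hu] at this
      have hyv : y <+: v := hyp.trans hβ'pre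
      have hly : y.length = x.length := hxy.len.symm
      have hy_eq : y = v.take x.length := by
        have := List.prefix_iff_eq_take.mp hyv; rwa [hly] at this
      rw [hx_eq, hy_eq] at hxy
      exact imin x.length ht1 hti hxy
    have hneb : ¬ HasExtB β β' := by
      rintro ⟨x, y, hx0, hxβ, hxp, hys, hyβ', hxy⟩
      have ht1 : 1 ≤ x.length := List.length_pos_iff.mpr hx0
      have hle : x.length ≤ i := lβ ▸ hxp.length_le
      have hti : x.length < i := by
        rcases lt_or_eq_of_le hle with h | h
        · exact h
        · exact absurd (hxp.eq_of_length (by rw [lβ, h])) hxβ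
      set t := x.length with ht_def
      have hx_eq : x = β.take t := List.prefix_iff_eq_take.mp hxp
      have hly : y.length = t := hxy.len.symm
      have hy_eq : y = β'.drop (i - t) := by
        have := List.suffix_iff_eq_drop.mp hys; rwa [lβ', hly] at this
      have hsplit : AbEq (β.take t ++ β.drop t) (β'.take (i - t) ++ β'.drop (i - t)) := by
        rw [List.take_append_drop, List.take_append_drop]; exact habi
      have hcan : AbEq (β.drop t) (β'.take (i - t)) := by
        refine hsplit.cancel14 ?_
        rw [← hx_eq, ← hy_eq]; exact hxy
      have e1 : β.drop t = u.drop (n - (i - t)) := by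
        rw [hβ_def, List.drop_drop]
        congr 1; omega
      have e2 : β'.take (i - t) = v.take (i - t) := by
        rw [hβ'_def, List.take_take, min_eq_left (by omega)]
      rw [e1, e2] at hcan
      exact imin (i - t) (by omega) (by omega) hcan
    -- MAU α α'
    have hnia : ¬ HasIntB α α' := by
      rintro ⟨x, y, hx0, hxα, hxs, hyp, hyα', hxy⟩
      have ht1 : 1 ≤ x.length := List.length_pos_iff.mpr hx0
      have hle : x.length ≤ j := lα ▸ hxs.length_le
      have htj : x.length < j := by
        rcases lt_or_eq_of_le hle with h | h
        · exact h
        · exact absurd (hxs.eq_of_length (by rw [lα, h])) hxα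
      set t := x.length with ht_def
      have hx_eq : x = α.drop (j - t) := by
        have := List.suffix_iff_eq_drop.mp hxs; rwa [lα] at this
      have hly : y.length = t := hxy.len.symm
      have hy_eq : y = α'.take t := by
        have := List.prefix_iff_eq_take.mp hyp; rwa [hly] at this
      have hsplit : AbEq (α.take (j - t) ++ α.drop (j - t)) (α'.take t ++ α'.drop t) := by
        rw [List.take_append_drop, List.take_append_drop]; exact habj.symm'
      have hcan : AbEq (α.take (j - t)) (α'.drop t) := by
        refine hsplit.cancel23 ?_
        rw [← hx_eq, ← hy_eq]; exact hxy
      have e1 : α.take (j - t) = u.take (j - t) := by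
        rw [hα_def, List.take_take, min_eq_left (by omega)]
      have e2 : α'.drop t = v.drop (n - (j - t)) := by
        rw [hα'_def, List.drop_drop]
        congr 1; omega
      rw [e1, e2] at hcan
      exact jmin (j - t) (by omega) (by omega) hcan.symm'
    have hnea : ¬ HasExtB α α' := by
      rintro ⟨x, y, hx0, hxα, hxp, hys, hyα', hxy⟩
      have ht1 : 1 ≤ x.length := List.length_pos_iff.mpr hx0
      have hle : x.length ≤ j := lα ▸ hxp.length_le
      have htj : x.length < j := by
        rcases lt_or_eq_of_le hle with h | h
        · exact h
        · exact absurd (hxp.eq_of_length (by rw [lα, h])) hxα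
      have hxu : x <+: u := hxp.trans hαpre
      have hx_eq : x = u.take x.length := List.prefix_iff_eq_take.mp hxu
      have hyv : y <:+ v := hys.trans hα'suf
      have hly : y.length = x.length := hxy.len.symm
      have hy_eq : y = v.drop (n - x.length) := by
        have := List.suffix_iff_eq_drop.mp hyv; rwa [hv, hly] at this
      rw [hx_eq, hy_eq] at hxy
      exact jmin x.length ht1 htj hxy.symm'
    refine ⟨α, β, β', α', (u.drop j).take (n - i - j), (v.drop i).take (n - i - j),
      ?_, ?_, ?_, ?_, ?_, ?_, habi, habj.symm', lα, lβ, ⟨hnib, hneb⟩, ⟨hnia, hnea⟩⟩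
    · exact List.ne_nil_of_length_pos (by omega)
    · exact List.ne_nil_of_length_pos (by omega)
    · exact List.ne_nil_of_length_pos (by omega)
    · exact List.ne_nil_of_length_pos (by omega)
    · -- u = α ++ mid ++ β
      have h1 : β = (u.drop j).drop (n - i - j) := by
        rw [hβ_def, List.drop_drop]; congr 1; omega
      rw [h1, List.append_assoc, List.take_append_drop, hα_def, List.take_append_drop]
    · have h1 : α' = (v.drop i).drop (n - i - j) := by
        rw [hα'_def, List.drop_drop]; congr 1; omega
      rw [h1, List.append_assoc, List.take_append_drop, hβ'_def, List.take_append_drop]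
  · -- reverse direction
    rintro ⟨α, β, β', α', x, x', hα, hβ, hβ', hα', huu, hvv, _, _, hlα, hlβ, _, _⟩
    have := congrArg List.length huu
    simp only [List.length_append, hu, hlα, hlβ] at this
    omega
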